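/- Let E ∈ K^{m×σ}, M ∈ K^{σ×σ}, s ∈ ℕ^m, δ ≥ deg of the minimal polynomial of M. Suppose that row i = φ(c,d) of the priority-permuted Krylov matrix K_{δ,s}(E,M) is a K-linear combination of the rows with indices < i. Then for every d' ∈ {0,…,δ−d}, row i' = φ(c,d+d') is a K-linear combination of the rows with indices < i'. -/

import Mathlib

open Polynomial Matrix

/-- Priority comparison on pairs `(c,d)`: lexicographic on `(s_c + d, c)`. -/
def keyLt {m : ℕ} (s : Fin m → ℕ) (x y : Fin m × ℕ) : Prop :=
  s x.1 + x.2 < s y.1 + y.2 ∨ (s x.1 + x.2 = s y.1 + y.2 ∧ x.1 < y.1)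

/-- Row `(c,d)` of the priority-permuted Krylov matrix `K_{δ,s}(E,M)` is a `K`-linear
combination of the rows preceding it. -/
def DepEarlier {K : Type*} [Field K] {m σ : ℕ} (E : Matrix (Fin m) (Fin σ) K)
    (M : Matrix (Fin σ) (Fin σ) K) (s : Fin m → ℕ) (δ : ℕ) (c : Fin m) (d : ℕ) : Prop :=
  Matrix.vecMul (E c) (M ^ d) ∈
    Submodule.span K
      ((fun y : Fin m × ℕ => Matrix.vecMul (E y.1) (M ^ y.2)) ''
        {y | y.2 ≤ δ ∧ keyLt s y (c, d)})

/-- Multiplication of a fixed row vector by a matrix, linear in the matrix. -/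
def rowMulLin {K : Type*} [Field K] {σ : ℕ} (v : Fin σ → K) :
    Matrix (Fin σ) (Fin σ) K →ₗ[K] (Fin σ → K) where
  toFun N := Matrix.vecMul v N
  map_add' A B := Matrix.vecMul_add A B v
  map_smul' b A := by
    ext j
    simp [Matrix.vecMul, dotProduct, Finset.mul_sum, mul_left_comm]

/-- Any power of `M`, hit on the left by a row vector, lies in the span of the
rows `v ᵥ* M^j` with `j ≤ δ`, as soon as `δ` bounds the degree of the minimal
polynomial of `M`. -/
lemma vecMul_pow_mem_span {K : Type*} [Field K] {σ δ : ℕ}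
    (M : Matrix (Fin σ) (Fin σ) K) (hδ : (minpoly K M).natDegree ≤ δ)
    (v : Fin σ → K) (k : ℕ) :
    Matrix.vecMul v (M ^ k) ∈ Submodule.span K
      ((fun j : ℕ => Matrix.vecMul v (M ^ j)) '' Set.Iic δ) := by
  set p := minpoly K M with hp_def
  have hp : p.Monic := minpoly.monic (Matrix.isIntegral M)
  set r := (X ^ k : K[X]) %ₘ p with hr_def
  have hred : (M ^ k : Matrix (Fin σ) (Fin σ) K) = Polynomial.aeval M r := by
    have h1 : (Polynomial.aeval M) (X ^ k : K[X]) = M ^ k := by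
      simp
    conv_lhs => rw [← h1, ← Polynomial.modByMonic_add_div (X ^ k : K[X]) p]
    rw [map_add, _root_.map_mul, hp_def, minpoly.aeval, zero_mul, add_zero]
  have hr : r.natDegree < δ + 1 :=
    lt_of_le_of_lt (le_trans (Polynomial.natDegree_modByMonic_le _ hp) hδ)
      (Nat.lt_succ_self δ)
  have hsum : (Polynomial.aeval M) r =
      ∑ i ∈ Finset.range (δ + 1), r.coeff i • M ^ i :=
    Polynomial.aeval_eq_sum_range' hr M
  have : Matrix.vecMul v (M ^ k) =
      ∑ i ∈ Finset.range (δ + 1), r.coeff i • Matrix.vecMul v (M ^ i) := by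
    have := congrArg (rowMulLin v) (hred.trans hsum)
    simpa [rowMulLin, map_sum, Matrix.vecMul_smul] using this
  rw [this]
  refine Submodule.sum_mem _ fun i hi => Submodule.smul_mem _ _ ?_
  exact Submodule.subset_span ⟨i, Set.mem_Iic.mpr (Nat.lt_succ_iff.mp
    (Finset.mem_range.mp hi)), rfl⟩

/-- One step of propagation: multiply the dependency relation by `M` and reduce
degree-`δ+1` terms using the minimal polynomial. -/
lemma depEarlier_succ {K : Type*} [Field K] {m σ δ : ℕ}
    (E : Matrix (Fin m) (Fin σ) K) (M : Matrix (Fin σ) (Fin σ) K) (s : Fin m → ℕ)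
    (hδ : (minpoly K M).natDegree ≤ δ)
    (c : Fin m) (e : ℕ) (he : e + 1 ≤ δ)
    (h : DepEarlier E M s δ c e) : DepEarlier E M s δ c (e + 1) := by
  unfold DepEarlier at h ⊢
  set T := M.vecMulLinear with hT_def
  have hmap : T (Matrix.vecMul (E c) (M ^ e)) ∈
      Submodule.span K (T '' ((fun y : Fin m × ℕ =>
        Matrix.vecMul (E y.1) (M ^ y.2)) '' {y | y.2 ≤ δ ∧ keyLt s y (c, e)})) := by
    rw [← Submodule.map_span]
    exact Submodule.mem_map_of_mem h
  have hTc : T (Matrix.vecMul (E c) (M ^ e)) = Matrix.vecMul (E c) (M ^ (e + 1)) := by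
    simp [hT_def, Matrix.vecMul_vecMul, pow_succ]
  rw [hTc] at hmap
  refine Submodule.span_le.mpr ?_ hmap
  rintro _ ⟨_, ⟨y, ⟨hy2, hylt⟩, rfl⟩, rfl⟩
  have hTv : T (Matrix.vecMul (E y.1) (M ^ y.2)) =
      Matrix.vecMul (E y.1) (M ^ (y.2 + 1)) := by
    simp [hT_def, Matrix.vecMul_vecMul, pow_succ]
  rw [hTv]
  rcases lt_or_eq_of_le hy2 with hlt | heq
  · refine Submodule.subset_span ⟨(y.1, y.2 + 1), ⟨hlt, ?_⟩, rfl⟩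
    rcases hylt with h1 | ⟨h1, h2⟩
    · have h1' : s y.1 + y.2 < s c + e := h1
      exact Or.inl (show s y.1 + (y.2 + 1) < s c + (e + 1) by omega)
    · have h1' : s y.1 + y.2 = s c + e := h1
      exact Or.inr ⟨show s y.1 + (y.2 + 1) = s c + (e + 1) by omega, h2⟩
  · -- y.2 = δ : reduce the power using the minimal polynomial
    refine Submodule.span_le.mpr ?_ (vecMul_pow_mem_span M hδ (E y.1) (y.2 + 1))
    rintro _ ⟨j, hj, rfl⟩
    refine Submodule.subset_span ⟨(y.1, j), ⟨Set.mem_Iic.mp hj, ?_⟩, rfl⟩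
    have hjδ : j ≤ δ := Set.mem_Iic.mp hj
    rcases hylt with h1 | ⟨h1, _⟩
    · have h1' : s y.1 + y.2 < s c + e := h1
      exact Or.inl (show s y.1 + j < s c + (e + 1) by omega)
    · have h1' : s y.1 + y.2 = s c + e := h1
      exact Or.inl (show s y.1 + j < s c + (e + 1) by omega)

/-- if row `(c,d)` of the priority-permuted Krylov matrix is a linear
combination of the earlier rows, then so is row `(c,d+d')` for every `d' ≤ δ − d`. -/
theorem depEarlier_propagates
    {K : Type*} [Field K] {m σ δ : ℕ}
    (E : Matrix (Fin m) (Fin σ) K) (M : Matrix (Fin σ) (Fin σ) K) (s : Fin m → ℕ)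
    (hδ : (minpoly K M).natDegree ≤ δ)
    (c : Fin m) (d : ℕ) (hd : d ≤ δ)
    (hdep : DepEarlier E M s δ c d) :
    ∀ d' : ℕ, d' ≤ δ - d → DepEarlier E M s δ c (d + d') := by
  intro d'
  induction d' with
  | zero => intro _; simpa using hdep
  | succ n ih =>
    intro h
    have h1 : d + n + 1 ≤ δ := by omega
    have := depEarlier_succ E M s hδ c (d + n) h1 (ih (by omega))
    rw [← add_assoc]
    exact this
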